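/- For θ > 0 and 0 ≤ λ < 1, the sum over n ≥ 0 of P_n(θ, λ) = θ(θ + nλ)^{n-1} / n! · e^{-θ - nλ} equals 1; i.e., the Generalized Poisson Distribution is a probability distribution. -/

import Mathlib

open Finset

lemma fd_pow : ∀ (M d : ℕ), d < M → ∀ (a : ℝ),
    ∑ m ∈ range (M+1), (-1:ℝ)^m * (M.choose m) * ((m:ℝ)+a)^d = 0 := by
  intro M
  induction M with
  | zero => exact fun d hd a => absurd hd (Nat.not_lt_zero d)
  | succ M ih =>
    intro d hd a
    have h1 : ∀ b : ℝ, ∑ m ∈ range (M+1+1), (-1:ℝ)^m * ((M+1).choose m) * ((m:ℝ)+b)^d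
        = (∑ m ∈ range (M+1), (-1:ℝ)^m * (M.choose m) * ((m:ℝ)+b)^d)
          - ∑ m ∈ range (M+1), (-1:ℝ)^m * (M.choose m) * ((m:ℝ)+(b+1))^d := by
      intro b
      rw [Finset.sum_range_succ' (fun m => (-1:ℝ)^m * ((M+1).choose m) * ((m:ℝ)+b)^d) (M+1),
          Finset.sum_range_succ' (fun m => (-1:ℝ)^m * ((M).choose m) * ((m:ℝ)+b)^d) M]
      simp only [Nat.cast_zero, zero_add, pow_zero, one_mul, Nat.choose_zero_right, Nat.cast_one]
      push_cast
      have hext : (∑ k ∈ range M, (-1:ℝ)^(k+1) * ((M).choose (k+1)) * ((k:ℝ)+1+b)^d)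
            = ∑ k ∈ range (M+1), (-1:ℝ)^(k+1) * ((M).choose (k+1)) * ((k:ℝ)+1+b)^d := by
        rw [Finset.sum_range_succ, Nat.choose_eq_zero_of_lt (Nat.lt_succ_self M)]
        simp
      have hpt : ∑ k ∈ range (M+1), (-1:ℝ)^(k+1) * (((M+1)).choose (k+1)) * ((k:ℝ)+1+b)^d
          = (∑ k ∈ range (M+1), (-1:ℝ)^(k+1) * ((M).choose (k+1)) * ((k:ℝ)+1+b)^d)
            - ∑ k ∈ range (M+1), (-1:ℝ)^k * ((M).choose k) * ((k:ℝ)+(b+1))^d := by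
        rw [← Finset.sum_sub_distrib]
        refine Finset.sum_congr rfl (fun k _ => ?_)
        rw [Nat.choose_succ_succ' M k]
        have h : ((k:ℝ)+(b+1)) = ((k:ℝ)+1+b) := by ring
        rw [h]
        push_cast
        ring
      rw [hpt, ← hext]
      ring
    rw [h1 a]
    rcases Nat.lt_or_ge d M with h | h
    · rw [ih d h a, ih d h (a+1), sub_zero]
    · have hdM : M = d := by omega
      subst hdM
      -- now goal : T a - T (a+1) = 0 with inner exponent d = M
      have hbin : ∀ x : ℝ, (x+1)^M = (∑ e ∈ range M, x^e * (M.choose e)) + x^M := by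
        intro x
        rw [add_pow, Finset.sum_range_succ]
        simp
      have hterm : ∀ (X p : ℝ), X*p^M - X*(p+1)^M
          = ∑ e ∈ range M, -((M.choose e:ℝ) * (X * p^e)) := by
        intro X p
        rw [hbin p, mul_add, Finset.mul_sum]
        have h2 : ∑ e ∈ range M, X*(p^e * (M.choose e:ℝ))
            = ∑ e ∈ range M, (M.choose e:ℝ)*(X*p^e) :=
          Finset.sum_congr rfl fun _ _ => by ring
        rw [h2, Finset.sum_neg_distrib]
        ring
      rw [← Finset.sum_sub_distrib]
      have hstep : ∀ k ∈ range (M+1), (-1:ℝ)^k * (M.choose k) * ((k:ℝ)+a)^M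
            - (-1:ℝ)^k * (M.choose k) * ((k:ℝ)+(a+1))^M
          = ∑ e ∈ range M, -((M.choose e:ℝ) * (((-1:ℝ)^k * (M.choose k)) * ((k:ℝ)+a)^e)) := by
        intro k _
        have h : ((k:ℝ)+(a+1)) = (((k:ℝ)+a)+1) := by ring
        rw [h, ← hterm]
      rw [Finset.sum_congr rfl hstep, Finset.sum_comm]
      refine Finset.sum_eq_zero (fun e he => ?_)
      have h3 : ∑ k ∈ range (M+1), -((M.choose e:ℝ) * (((-1:ℝ)^k * (M.choose k)) * ((k:ℝ)+a)^e))
          = -((M.choose e:ℝ)) * ∑ k ∈ range (M+1), (-1:ℝ)^k * (M.choose k) * ((k:ℝ)+a)^e := by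
        rw [Finset.mul_sum]
        exact Finset.sum_congr rfl fun _ _ => by ring
      rw [h3, ih e (Finset.mem_range.mp he) a, mul_zero]


lemma abel_id (N : ℕ) (x z : ℝ) :
    ∑ k ∈ range (N+1),
      (N.choose k : ℝ) * (if k = 0 then (1:ℝ) else x*(x+(k:ℝ)*z)^(k-1)) * (-((k:ℝ)*z))^(N-k)
    = x^N := by
  rcases Nat.eq_zero_or_pos N with h0 | hN
  · subst h0; norm_num
  rw [Finset.sum_range_succ' _ N]
  have h0term : ((N.choose 0 : ℝ)) *
      (if (0:ℕ) = 0 then (1:ℝ) else x*(x+((0:ℕ):ℝ)*z)^(0-1)) * (-(((0:ℕ):ℝ)*z))^(N-0) = 0 := by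
    simp [zero_pow (by omega : N ≠ 0)]
  rw [h0term, add_zero]
  have hstep1 : ∀ k ∈ range N,
      ((N.choose (k+1) : ℝ)) * (if (k+1) = 0 then (1:ℝ)
          else x*(x+((k+1:ℕ):ℝ)*z)^((k+1)-1)) * (-(((k+1:ℕ):ℝ)*z))^(N-(k+1))
      = ∑ j ∈ range (k+1), (N.choose (k+1):ℝ) * (k.choose j) * (-1)^(N-1-k)
          * x^(j+1) * (((k:ℝ)+1)*z)^(N-1-j) := by
    intro k hk
    have hkN : k < N := mem_range.mp hk
    simp only [if_neg (Nat.succ_ne_zero k), Nat.add_sub_cancel, Nat.cast_add, Nat.cast_one]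
    rw [add_pow x (((k:ℝ)+1)*z) k, neg_pow, show N - (k+1) = N-1-k by omega,
        Finset.mul_sum, Finset.mul_sum, Finset.sum_mul]
    refine Finset.sum_congr rfl (fun j hj => ?_)
    have hjk : j ≤ k := Nat.lt_succ_iff.mp (mem_range.mp hj)
    rw [show N-1-j = (k-j)+(N-1-k) by omega, pow_add]
    ring
  rw [Finset.sum_congr rfl hstep1]
  simp only [Finset.range_eq_Ico]
  rw [← Finset.sum_Ico_Ico_comm 0 N
      (fun j k => (N.choose (k+1):ℝ) * (k.choose j) * (-1)^(N-1-k)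
          * x^(j+1) * (((k:ℝ)+1)*z)^(N-1-j))]
  -- now : ∑ j ∈ Ico 0 N, ∑ k ∈ Ico j N, g j k = x ^ N
  have hmem : N - 1 ∈ Finset.Ico 0 N := by simp; omega
  rw [Finset.sum_eq_single_of_mem (N-1) hmem ?side]
  · -- top term
    have hIco : Finset.Ico (N-1) N = {N-1} := by
      ext a; simp [Finset.mem_Ico]; omega
    rw [hIco, Finset.sum_singleton, show N-1+1 = N by omega]
    simp [Nat.choose_self, Nat.sub_self]
  case side =>
    intro j hj hjne
    have hjN : j < N - 1 := by
      have := (Finset.mem_Ico.mp hj).2; omega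
    rw [Finset.sum_Ico_eq_sum_range]
    set M := N - 1 - j with hM
    set d := N - 2 - j with hd
    have hMpos : 1 ≤ M := by omega
    have hdM : d < M := by omega
    have hNj : N - j = M + 1 := by omega
    rw [hNj]
    have hpt : ∀ m ∈ range (M+1),
        (N.choose (j+m+1):ℝ) * ((j+m).choose j) * (-1)^(N-1-(j+m))
            * x^(j+1) * ((((j+m:ℕ):ℝ)+1)*z)^(N-1-j)
        = (((j:ℝ)+1) * (N.choose (j+1):ℝ) * x^(j+1) * z^(N-1-j) * (-1)^M)
            * ((-1:ℝ)^m * ((M.choose m):ℝ) * (((m:ℕ):ℝ)+((j:ℝ)+1))^d) := by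
      intro m hm
      have hmM : m ≤ M := Nat.lt_succ_iff.mp (mem_range.mp hm)
      -- combinatorial identity in ℕ
      have hc : (j+m+1) * (N.choose (j+m+1)) * ((j+m).choose j)
          = (j+1) * (N.choose (j+1)) * (M.choose m) := by
        have h1 : (j+m+1) * ((j+m).choose j) = ((j+m+1).choose (j+1)) * (j+1) :=
          Nat.add_one_mul_choose_eq (j+m) j
        have h2 : (N.choose (j+m+1)) * ((j+m+1).choose (j+1))
            = (N.choose (j+1)) * ((N-(j+1)).choose ((j+m+1)-(j+1))) :=
          Nat.choose_mul (by omega)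
        have h3 : (N-(j+1)) = M := by omega
        have h4 : (j+m+1)-(j+1) = m := by omega
        rw [h3, h4] at h2
        calc (j+m+1) * (N.choose (j+m+1)) * ((j+m).choose j)
            = (N.choose (j+m+1)) * ((j+m+1) * ((j+m).choose j)) := by ring
          _ = (N.choose (j+m+1)) * (((j+m+1).choose (j+1)) * (j+1)) := by rw [h1]
          _ = ((N.choose (j+m+1)) * ((j+m+1).choose (j+1))) * (j+1) := by ring
          _ = ((N.choose (j+1)) * (M.choose m)) * (j+1) := by rw [h2]
          _ = (j+1) * (N.choose (j+1)) * (M.choose m) := by ring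
      have hcR : ((j:ℝ)+(m:ℝ)+1) * (N.choose (j+m+1):ℝ) * (((j+m).choose j):ℝ)
          = ((j:ℝ)+1) * (N.choose (j+1):ℝ) * ((M.choose m):ℝ) := by
        have := congrArg (fun t : ℕ => (t:ℝ)) hc
        push_cast at this
        convert this using 2 <;> push_cast <;> ring
      have hsign : ((-1:ℝ))^(N-1-(j+m)) = (-1:ℝ)^M * (-1:ℝ)^m := by
        rw [← pow_add, show M + m = (N-1-(j+m)) + 2*m by omega, pow_add, pow_mul]
        simp
      have hpow : ((((j+m:ℕ):ℝ))+1)*z = (((j:ℝ)+(m:ℝ)+1))*z := by push_cast; ring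
      rw [hpow, hsign, mul_pow, show N-1-j = d + 1 by omega]
      have hbase : (((j:ℝ)+(m:ℝ)+1))^(d+1) = (((m:ℕ):ℝ)+((j:ℝ)+1))^d * ((j:ℝ)+(m:ℝ)+1) := by
        rw [pow_succ]
        congr 1
        push_cast; ring_nf
      rw [hbase]
      linear_combination hcR * ((-1:ℝ)^M * (-1:ℝ)^m * x^(j+1) * z^(d+1) * (((m:ℕ):ℝ)+((j:ℝ)+1))^d)
    rw [Finset.sum_congr rfl hpt, ← Finset.mul_sum,
        fd_pow M d hdM ((j:ℝ)+1), mul_zero]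



noncomputable def gpdf (θ l : ℝ) (n : ℕ) : ℝ :=
  (if n = 0 then 1 else θ*(θ+(n:ℝ)*l)^(n-1)) * Real.exp (-θ-(n:ℝ)*l) / n.factorial

lemma hasSum_exp_real (x : ℝ) : HasSum (fun m : ℕ => x^m / m.factorial) (Real.exp x) := by
  rw [Real.exp_eq_exp_ℝ]
  exact NormedSpace.expSeries_div_hasSum_exp x

lemma pow_le_fact_exp (n : ℕ) : (n:ℝ)^n ≤ (n.factorial : ℝ) * Real.exp n := by
  have h := (hasSum_exp_real (n:ℝ))
  have h1 : (n:ℝ)^n / n.factorial ≤ Real.exp n := by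
    refine le_of_le_of_eq (le_hasSum h n (fun m _ => by positivity)) rfl
  calc (n:ℝ)^n = ((n:ℝ)^n / n.factorial) * n.factorial := by
        field_simp
    _ ≤ Real.exp n * n.factorial := by
        apply mul_le_mul_of_nonneg_right h1 (by positivity)
    _ = (n.factorial : ℝ) * Real.exp n := by ring

lemma gpd_hasSum_one_small (θ l : ℝ) (hθ : 0 < θ) (hl0 : 0 < l) (hl1 : l ≤ 1/5) :
    HasSum (gpdf θ l) 1 := by
  classical
  set c : ℕ → ℝ := fun n => (if n = 0 then 1 else θ*(θ+(n:ℝ)*l)^(n-1)) * Real.exp (-θ) / n.factorial with hc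
  have hc_nonneg : ∀ n, 0 ≤ c n := by
    intro n
    rcases Nat.eq_zero_or_pos n with h | h
    · subst h; simp [hc]; positivity
    · have : (0:ℝ) ≤ θ + (n:ℝ)*l := by positivity
      simp only [hc, if_neg (Nat.pos_iff_ne_zero.mp h)]
      positivity
  set a : ℕ × ℕ → ℝ := fun p => c p.1 * (-((p.1:ℝ)*l))^p.2 / p.2.factorial with ha
  -- row sums
  have hrow : ∀ n : ℕ, HasSum (fun m => a (n, m)) (gpdf θ l n) := by
    intro n
    have h := (hasSum_exp_real (-((n:ℝ)*l))).mul_left (c n)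
    convert h using 2 with m
    · rfl
    · simp only [ha, mul_div_assoc]
    · simp only [hc, gpdf]
      rw [show -θ-(n:ℝ)*l = -θ + -((n:ℝ)*l) by ring, Real.exp_add]
      ring
  -- abs row sums
  have hrowabs : ∀ n : ℕ, HasSum (fun m => |a (n, m)|) (c n * Real.exp ((n:ℝ)*l)) := by
    intro n
    have h := (hasSum_exp_real ((n:ℝ)*l)).mul_left (c n)
    have heq : ∀ m : ℕ, |a (n,m)| = c n * (((n:ℝ)*l)^m / m.factorial) := by
      intro m
      simp only [ha]
      rw [abs_div, abs_mul, abs_pow, abs_neg, abs_of_nonneg (hc_nonneg n),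
          abs_of_nonneg (by positivity : (0:ℝ) ≤ (n:ℝ)*l), Nat.abs_cast, mul_div_assoc]
    exact (funext heq : (fun m => |a (n,m)|) = _) ▸ h
  -- geometric bound
  set r : ℝ := l * Real.exp (1 + l) with hr
  have hr0 : 0 ≤ r := by positivity
  have hr1 : r < 1 := by
    have he15 : Real.exp (1/5) ≤ 5/4 := by
      have h := Real.add_one_le_exp (-(1/5) : ℝ)
      have h2 : (0:ℝ) < Real.exp (-(1/5)) := Real.exp_pos _
      rw [show Real.exp (1/5 : ℝ) = (Real.exp (-(1/5):ℝ))⁻¹ by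
        rw [← Real.exp_neg]; norm_num]
      rw [inv_le_comm₀ h2 (by norm_num)]
      linarith
    have hexp : Real.exp (1 + l) ≤ Real.exp 1 * (5/4) := by
      rw [Real.exp_add]
      have : Real.exp l ≤ Real.exp (1/5) := Real.exp_le_exp.mpr hl1
      nlinarith [Real.exp_pos (1:ℝ), Real.exp_pos l]
    have he1 : Real.exp 1 < 2.7182818286 := Real.exp_one_lt_d9
    have : r ≤ (1/5) * (Real.exp 1 * (5/4)) := by
      have h1 : l * Real.exp (1+l) ≤ (1/5) * Real.exp (1+l) :=
        mul_le_mul_of_nonneg_right hl1 (Real.exp_pos _).le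
      have h2 : (1/5 : ℝ) * Real.exp (1+l) ≤ (1/5) * (Real.exp 1 * (5/4)) := by
        nlinarith
      linarith
    nlinarith
  set K : ℝ := Real.exp (-θ) + θ * Real.exp (θ/l) * Real.exp (-θ) / l with hK
  have hbound : ∀ n : ℕ, c n * Real.exp ((n:ℝ)*l) ≤ K * r^n := by
    intro n
    rcases Nat.eq_zero_or_pos n with h | h
    · subst h
      have hco : c 0 = Real.exp (-θ) := by simp [hc]
      have : (0:ℝ) ≤ θ * Real.exp (θ/l) * Real.exp (-θ) / l := by positivity
      rw [hco]
      simp only [Nat.cast_zero, zero_mul, Real.exp_zero, pow_zero, mul_one, hK]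
      linarith
    · have hn0 : n ≠ 0 := Nat.pos_iff_ne_zero.mp h
      have hn1 : (1:ℝ) ≤ (n:ℝ) := by exact_mod_cast h
      have hnl : (0:ℝ) < (n:ℝ)*l := by positivity
      have k1 : θ + (n:ℝ)*l ≤ ((n:ℝ)*l) * Real.exp (θ/((n:ℝ)*l)) := by
        have h1 := Real.add_one_le_exp (θ/((n:ℝ)*l))
        have h2 : (θ/((n:ℝ)*l) + 1) * ((n:ℝ)*l) ≤ Real.exp (θ/((n:ℝ)*l)) * ((n:ℝ)*l) :=
          mul_le_mul_of_nonneg_right h1 hnl.le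
        calc θ + (n:ℝ)*l = (θ/((n:ℝ)*l) + 1) * ((n:ℝ)*l) := by field_simp
          _ ≤ Real.exp (θ/((n:ℝ)*l)) * ((n:ℝ)*l) := h2
          _ = ((n:ℝ)*l) * Real.exp (θ/((n:ℝ)*l)) := by ring
      have k2 : (θ + (n:ℝ)*l)^(n-1) ≤ ((n:ℝ)*l)^(n-1) * Real.exp (θ/l) := by
        calc (θ + (n:ℝ)*l)^(n-1) ≤ (((n:ℝ)*l) * Real.exp (θ/((n:ℝ)*l)))^(n-1) := by
              apply pow_le_pow_left₀ (by positivity) k1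
          _ = ((n:ℝ)*l)^(n-1) * (Real.exp (θ/((n:ℝ)*l)))^(n-1) := mul_pow _ _ _
          _ = ((n:ℝ)*l)^(n-1) * Real.exp (((n-1:ℕ):ℝ) * (θ/((n:ℝ)*l))) := by
              rw [← Real.exp_nat_mul]
          _ ≤ ((n:ℝ)*l)^(n-1) * Real.exp (θ/l) := by
              apply mul_le_mul_of_nonneg_left _ (by positivity)
              apply Real.exp_le_exp.mpr
              have hcast : ((n-1:ℕ):ℝ) ≤ (n:ℝ) := by exact_mod_cast Nat.sub_le n 1
              calc ((n-1:ℕ):ℝ) * (θ/((n:ℝ)*l)) ≤ (n:ℝ) * (θ/((n:ℝ)*l)) := by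
                    apply mul_le_mul_of_nonneg_right hcast (by positivity)
                _ = θ/l := by field_simp
      have k3 : (1:ℝ)/(n.factorial:ℝ) ≤ Real.exp n / (n:ℝ)^n := by
        rw [div_le_div_iff₀ (by positivity) (by positivity)]
        nlinarith [pow_le_fact_exp n]
      have expand : c n * Real.exp ((n:ℝ)*l)
          = (θ * Real.exp (-θ) * Real.exp ((n:ℝ)*l)) * (θ + (n:ℝ)*l)^(n-1) * (1/(n.factorial:ℝ)) := by
        simp only [hc, if_neg hn0]
        ring
      have step : c n * Real.exp ((n:ℝ)*l)
          ≤ (θ * Real.exp (-θ) * Real.exp ((n:ℝ)*l)) * (((n:ℝ)*l)^(n-1) * Real.exp (θ/l)) * (Real.exp n / (n:ℝ)^n) := by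
        rw [expand]
        have c1 : (0:ℝ) ≤ θ * Real.exp (-θ) * Real.exp ((n:ℝ)*l) := by positivity
        gcongr
      refine le_trans step ?_
      -- algebraic simplification
      have hpowsplit : ((n:ℝ))^n = (n:ℝ)^(n-1) * (n:ℝ) := by
        conv_rhs => rw [← pow_succ]
        rw [Nat.sub_add_cancel h]
      have hln : ((n:ℝ)*l)^(n-1) = (n:ℝ)^(n-1) * l^(n-1) := mul_pow _ _ _
      have hexpn : Real.exp ((n:ℝ)*l) * Real.exp (n:ℝ) = (Real.exp (1+l))^n := by
        rw [← Real.exp_nat_mul, ← Real.exp_add]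
        congr 1
        ring
      have hlpow : l^(n-1) = l^n / l := by
        rw [eq_div_iff (ne_of_gt hl0), ← pow_succ, Nat.sub_add_cancel h]
      have heq2 : (θ * Real.exp (-θ) * Real.exp ((n:ℝ)*l)) * (((n:ℝ)*l)^(n-1) * Real.exp (θ/l)) * (Real.exp n / (n:ℝ)^n)
          = (θ * Real.exp (θ/l) * Real.exp (-θ) / l) * r^n * (1/(n:ℝ)) := by
        rw [hln, hpowsplit, hlpow, hr, mul_pow, ← hexpn]
        have hne : (n:ℝ) ≠ 0 := by positivity
        have hne2 : (n:ℝ)^(n-1) ≠ 0 := by positivity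
        field_simp
      rw [heq2]
      have h1n : 1/(n:ℝ) ≤ 1 := by
        rw [div_le_one (by positivity)]; exact hn1
      have hC0 : (0:ℝ) ≤ θ * Real.exp (θ/l) * Real.exp (-θ) / l := by positivity
      calc (θ * Real.exp (θ/l) * Real.exp (-θ) / l) * r^n * (1/(n:ℝ))
          ≤ (θ * Real.exp (θ/l) * Real.exp (-θ) / l) * r^n * 1 := by
            apply mul_le_mul_of_nonneg_left h1n (by positivity)
        _ ≤ K * r^n := by
            rw [mul_one, hK]
            have : (0:ℝ) ≤ Real.exp (-θ) := (Real.exp_pos _).le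
            have hrn : (0:ℝ) ≤ r^n := pow_nonneg hr0 n
            nlinarith
  -- summability
  have hrowsummable : Summable (fun n => c n * Real.exp ((n:ℝ)*l)) := by
    refine Summable.of_nonneg_of_le
      (fun n => mul_nonneg (hc_nonneg n) (Real.exp_pos _).le) hbound ?_
    exact (summable_geometric_of_lt_one hr0 hr1).mul_left K
  have habs : Summable (fun p : ℕ×ℕ => |a p|) := by
    rw [summable_prod_of_nonneg (fun p => abs_nonneg _)]
    refine ⟨fun n => (hrowabs n).summable, ?_⟩
    apply hrowsummable.congr
    intro n
    exact ((hrowabs n).tsum_eq).symm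
  have hsummable : Summable a := habs.of_abs
  obtain ⟨S, hS⟩ := hsummable
  have hfS : HasSum (gpdf θ l) S := hS.prod_fiberwise hrow
  have hsig : HasSum (fun N : ℕ => ∑ p ∈ Finset.HasAntidiagonal.antidiagonal N, a p) S := by
    have h1 : HasSum (a ∘ Finset.HasAntidiagonal.sigmaAntidiagonalEquivProd) S :=
      (Equiv.hasSum_iff _).mpr hS
    refine HasSum.sigma h1 ?_
    intro N
    have h2 := hasSum_fintype (fun p : {x : ℕ×ℕ // x ∈ Finset.HasAntidiagonal.antidiagonal N} => a p.val)
    rw [Finset.sum_coe_sort (Finset.HasAntidiagonal.antidiagonal N) a] at h2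
    exact h2
  have hfib : ∀ N, ∑ p ∈ Finset.HasAntidiagonal.antidiagonal N, a p = Real.exp (-θ) * θ^N / N.factorial := by
    intro N
    rw [Finset.Nat.sum_antidiagonal_eq_sum_range_succ_mk]
    have hpt : ∀ k ∈ range (N+1), a (k, N-k)
        = (Real.exp (-θ) / N.factorial) * ((N.choose k : ℝ)
            * (if k = 0 then (1:ℝ) else θ*(θ+(k:ℝ)*l)^(k-1)) * (-((k:ℝ)*l))^(N-k)) := by
      intro k hk
      have hkN : k ≤ N := Nat.lt_succ_iff.mp (mem_range.mp hk)
      have hfact : (N.choose k : ℝ) * (k.factorial : ℝ) * (((N-k).factorial : ℕ) : ℝ) = (N.factorial : ℝ) := by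
        exact_mod_cast Nat.choose_mul_factorial_mul_factorial hkN
      simp only [ha, hc]
      have hk1 : ((k.factorial : ℕ):ℝ) ≠ 0 := by positivity
      have hk2 : (((N-k).factorial : ℕ):ℝ) ≠ 0 := by positivity
      have hk3 : ((N.factorial : ℕ):ℝ) ≠ 0 := by positivity
      set w := (if k = 0 then (1:ℝ) else θ*(θ+(k:ℝ)*l)^(k-1)) with hw
      field_simp
      linear_combination (-(w * (k:ℝ)^(N-k) * l^(N-k) * (-1)^(N-k))) * hfact
    rw [Finset.sum_congr rfl hpt, ← Finset.mul_sum, abel_id N θ l]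
    ring
  have hone : HasSum (fun N : ℕ => Real.exp (-θ) * θ^N / N.factorial) 1 := by
    have h := (hasSum_exp_real θ).mul_left (Real.exp (-θ))
    rw [← Real.exp_add, neg_add_cancel, Real.exp_zero] at h
    simpa [mul_div_assoc] using h
  have hS1 : S = 1 := HasSum.unique ((funext hfib : _) ▸ hsig) hone
  exact hS1 ▸ hfS





noncomputable def cf (θ : ℝ) (n : ℕ) (z : ℂ) : ℂ :=
  (if n = 0 then 1 else (θ:ℂ)*((θ:ℂ)+(n:ℂ)*z)^(n-1)) * Complex.exp (-(θ:ℂ)-(n:ℂ)*z)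
    / n.factorial

lemma cf_real (θ x : ℝ) (n : ℕ) : cf θ n (x:ℂ) = ((gpdf θ x n : ℝ) : ℂ) := by
  simp only [cf, gpdf]
  split <;> push_cast <;> ring

lemma cf_differentiable (θ : ℝ) (n : ℕ) : Differentiable ℂ (cf θ n) := by
  unfold cf
  apply Differentiable.div_const
  apply Differentiable.mul
  · split
    · exact differentiable_const _
    · exact (differentiable_const _).mul
        (((differentiable_const _).add (differentiable_id.const_mul _)).pow _)
  · exact Complex.differentiable_exp.comp
      ((differentiable_const _).sub (differentiable_id.const_mul _))

-- the key real bound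
lemma real_term_bound (θ w t' : ℝ) (hθ : 0 < θ) (hw : 0 < w) (n : ℕ) (hn : 1 ≤ n) :
    θ*(θ+(n:ℝ)*w)^(n-1)*Real.exp (-θ-(n:ℝ)*t')/(n.factorial:ℝ)
      ≤ (θ*Real.exp (θ/w)*Real.exp (-θ)/w) * (w*Real.exp (1-t'))^n := by
  have h : 0 < n := hn
  have hn0 : n ≠ 0 := Nat.pos_iff_ne_zero.mp h
  have hn1 : (1:ℝ) ≤ (n:ℝ) := by exact_mod_cast h
  have hnw : (0:ℝ) < (n:ℝ)*w := by positivity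
  have k1 : θ + (n:ℝ)*w ≤ ((n:ℝ)*w) * Real.exp (θ/((n:ℝ)*w)) := by
    have h1 := Real.add_one_le_exp (θ/((n:ℝ)*w))
    have h2 : (θ/((n:ℝ)*w) + 1) * ((n:ℝ)*w) ≤ Real.exp (θ/((n:ℝ)*w)) * ((n:ℝ)*w) :=
      mul_le_mul_of_nonneg_right h1 hnw.le
    calc θ + (n:ℝ)*w = (θ/((n:ℝ)*w) + 1) * ((n:ℝ)*w) := by field_simp
      _ ≤ Real.exp (θ/((n:ℝ)*w)) * ((n:ℝ)*w) := h2
      _ = ((n:ℝ)*w) * Real.exp (θ/((n:ℝ)*w)) := by ring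
  have k2 : (θ + (n:ℝ)*w)^(n-1) ≤ ((n:ℝ)*w)^(n-1) * Real.exp (θ/w) := by
    calc (θ + (n:ℝ)*w)^(n-1) ≤ (((n:ℝ)*w) * Real.exp (θ/((n:ℝ)*w)))^(n-1) := by
          apply pow_le_pow_left₀ (by positivity) k1
      _ = ((n:ℝ)*w)^(n-1) * (Real.exp (θ/((n:ℝ)*w)))^(n-1) := mul_pow _ _ _
      _ = ((n:ℝ)*w)^(n-1) * Real.exp (((n-1:ℕ):ℝ) * (θ/((n:ℝ)*w))) := by
          rw [← Real.exp_nat_mul]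
      _ ≤ ((n:ℝ)*w)^(n-1) * Real.exp (θ/w) := by
          apply mul_le_mul_of_nonneg_left _ (by positivity)
          apply Real.exp_le_exp.mpr
          have hcast : ((n-1:ℕ):ℝ) ≤ (n:ℝ) := by exact_mod_cast Nat.sub_le n 1
          calc ((n-1:ℕ):ℝ) * (θ/((n:ℝ)*w)) ≤ (n:ℝ) * (θ/((n:ℝ)*w)) := by
                apply mul_le_mul_of_nonneg_right hcast (by positivity)
            _ = θ/w := by field_simp
  have k3 : (1:ℝ)/(n.factorial:ℝ) ≤ Real.exp n / (n:ℝ)^n := by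
    rw [div_le_div_iff₀ (by positivity) (by positivity)]
    nlinarith [pow_le_fact_exp n]
  have expand : θ*(θ+(n:ℝ)*w)^(n-1)*Real.exp (-θ-(n:ℝ)*t')/(n.factorial:ℝ)
      = (θ * Real.exp (-θ) * Real.exp (-(n:ℝ)*t')) * (θ + (n:ℝ)*w)^(n-1) * (1/(n.factorial:ℝ)) := by
    rw [show -θ-(n:ℝ)*t' = -θ + (-(n:ℝ)*t') by ring, Real.exp_add]
    ring
  have step : θ*(θ+(n:ℝ)*w)^(n-1)*Real.exp (-θ-(n:ℝ)*t')/(n.factorial:ℝ)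
      ≤ (θ * Real.exp (-θ) * Real.exp (-(n:ℝ)*t')) * (((n:ℝ)*w)^(n-1) * Real.exp (θ/w))
        * (Real.exp n / (n:ℝ)^n) := by
    rw [expand]
    have c1 : (0:ℝ) ≤ θ * Real.exp (-θ) * Real.exp (-(n:ℝ)*t') := by positivity
    gcongr
  refine le_trans step ?_
  have hpowsplit : ((n:ℝ))^n = (n:ℝ)^(n-1) * (n:ℝ) := by
    conv_rhs => rw [← pow_succ]
    rw [Nat.sub_add_cancel h]
  have hln : ((n:ℝ)*w)^(n-1) = (n:ℝ)^(n-1) * w^(n-1) := mul_pow _ _ _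
  have hexpn : Real.exp (-(n:ℝ)*t') * Real.exp (n:ℝ) = (Real.exp (1-t'))^n := by
    rw [← Real.exp_nat_mul, ← Real.exp_add]
    congr 1
    ring
  have hlpow : w^(n-1) = w^n / w := by
    rw [eq_div_iff (ne_of_gt hw), ← pow_succ, Nat.sub_add_cancel h]
  have heq2 : (θ * Real.exp (-θ) * Real.exp (-(n:ℝ)*t')) * (((n:ℝ)*w)^(n-1) * Real.exp (θ/w))
        * (Real.exp n / (n:ℝ)^n)
      = (θ * Real.exp (θ/w) * Real.exp (-θ) / w) * (w * Real.exp (1-t'))^n * (1/(n:ℝ)) := by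
    rw [hln, hpowsplit, hlpow, mul_pow, ← hexpn]
    have hne : (n:ℝ) ≠ 0 := by positivity
    have hne2 : (n:ℝ)^(n-1) ≠ 0 := by positivity
    field_simp
  rw [heq2]
  have h1n : 1/(n:ℝ) ≤ 1 := by
    rw [div_le_one (by positivity)]; exact hn1
  calc (θ * Real.exp (θ/w) * Real.exp (-θ) / w) * (w * Real.exp (1-t'))^n * (1/(n:ℝ))
      ≤ (θ * Real.exp (θ/w) * Real.exp (-θ) / w) * (w * Real.exp (1-t'))^n * 1 := by
        apply mul_le_mul_of_nonneg_left h1n (by positivity)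
    _ = (θ * Real.exp (θ/w) * Real.exp (-θ) / w) * (w * Real.exp (1-t'))^n := mul_one _

lemma cf_norm (θ : ℝ) (hθ : 0 < θ) (n : ℕ) (z : ℂ) :
    ‖cf θ n z‖ = (if n = 0 then 1 else θ * (‖(θ:ℂ)+(n:ℂ)*z‖)^(n-1))
      * Real.exp (-θ - (n:ℝ)*z.re) / n.factorial := by
  unfold cf
  rw [norm_div, norm_mul, Complex.norm_exp]
  have hre : (-(θ:ℂ)-(n:ℂ)*z).re = -θ - (n:ℝ)*z.re := by
    simp [Complex.sub_re, Complex.mul_re]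
  rw [hre]
  congr 1
  · congr 1
    split
    · simp
    · rw [norm_mul, norm_pow, Complex.norm_real, Real.norm_eq_abs, abs_of_pos hθ]
  · simp [Complex.norm_natCast]

lemma cf_ball_bound (θ : ℝ) (hθ : 0 < θ) (z0 : ℂ)
    (h : ‖z0‖ * Real.exp (1 - z0.re) < 1) :
    ∃ ρ > 0, ∃ u : ℕ → ℝ, Summable u ∧
      ∀ n, ∀ z ∈ Metric.closedBall z0 ρ, ‖cf θ n z‖ ≤ u n := by
  -- choose ρ
  have hcont : Continuous (fun ρ : ℝ => (‖z0‖ + ρ) * Real.exp (1 - (z0.re - ρ))) := by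
    continuity
  have htend : Filter.Tendsto (fun ρ : ℝ => (‖z0‖ + ρ) * Real.exp (1 - (z0.re - ρ)))
      (nhds 0) (nhds (‖z0‖ * Real.exp (1 - z0.re))) := by
    have := hcont.tendsto 0
    simpa using this
  have hev : ∀ᶠ ρ in nhds (0:ℝ), (‖z0‖ + ρ) * Real.exp (1 - (z0.re - ρ)) < 1 :=
    htend.eventually_lt_const h
  have hev' : ∀ᶠ ρ in nhdsWithin (0:ℝ) (Set.Ioi 0),
      (‖z0‖ + ρ) * Real.exp (1 - (z0.re - ρ)) < 1 :=
    eventually_nhdsWithin_of_eventually_nhds hev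
  have hmem : ∀ᶠ ρ in nhdsWithin (0:ℝ) (Set.Ioi 0), ρ ∈ Set.Ioi (0:ℝ) :=
    eventually_mem_nhdsWithin
  obtain ⟨ρ, hρ1, hρ0⟩ := (hev'.and hmem).exists
  refine ⟨ρ, hρ0, ?_⟩
  set w := ‖z0‖ + ρ with hwdef
  set t' := z0.re - ρ with htdef
  have hw : 0 < w := by
    have := norm_nonneg z0
    simp only [hwdef]
    linarith [Set.mem_Ioi.mp hρ0]
  set q := w * Real.exp (1 - t') with hqdef
  have hq0 : 0 ≤ q := by positivity
  have hq1 : q < 1 := hρ1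
  set C := θ * Real.exp (θ/w) * Real.exp (-θ) / w with hCdef
  set M := C + Real.exp (-θ) with hMdef
  have hC0 : 0 ≤ C := by positivity
  refine ⟨fun n => M * q^n, (summable_geometric_of_lt_one hq0 hq1).mul_left M, ?_⟩
  intro n z hz
  have hzw : ‖z‖ ≤ w := by
    have h1 : ‖z - z0‖ ≤ ρ := by
      rw [Metric.mem_closedBall] at hz
      simpa [Complex.dist_eq] using hz
    calc ‖z‖ = ‖z0 + (z - z0)‖ := by ring_nf
      _ ≤ ‖z0‖ + ‖z - z0‖ := norm_add_le _ _
      _ ≤ w := by simp only [hwdef]; linarith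
  have hzt : t' ≤ z.re := by
    have h1 : ‖z - z0‖ ≤ ρ := by
      rw [Metric.mem_closedBall] at hz
      simpa [Complex.dist_eq] using hz
    have h2 : |(z - z0).re| ≤ ρ := le_trans (Complex.abs_re_le_norm _) h1
    have h3 : (z - z0).re = z.re - z0.re := by simp [Complex.sub_re]
    rw [h3] at h2
    have := abs_le.mp h2
    simp only [htdef]
    linarith [this.1]
  rw [cf_norm θ hθ n z]
  rcases Nat.eq_zero_or_pos n with h0 | hn
  · subst h0
    norm_num
    simp only [hMdef]
    linarith [hC0]
  · have hn0 : n ≠ 0 := Nat.pos_iff_ne_zero.mp hn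
    rw [if_neg hn0]
    have habs : ‖(θ:ℂ)+(n:ℂ)*z‖ ≤ θ + (n:ℝ)*w := by
      calc ‖(θ:ℂ)+(n:ℂ)*z‖ ≤ ‖(θ:ℂ)‖ + ‖(n:ℂ)*z‖ :=
            norm_add_le _ _
        _ = θ + (n:ℝ) * ‖z‖ := by
            rw [norm_mul, Complex.norm_real, Real.norm_eq_abs, abs_of_pos hθ, Complex.norm_natCast]
        _ ≤ θ + (n:ℝ)*w := by nlinarith [Nat.cast_nonneg (α := ℝ) n]
    have hpow : (‖(θ:ℂ)+(n:ℂ)*z‖)^(n-1) ≤ (θ + (n:ℝ)*w)^(n-1) :=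
      pow_le_pow_left₀ (norm_nonneg _) habs _
    have hexp : Real.exp (-θ - (n:ℝ)*z.re) ≤ Real.exp (-θ - (n:ℝ)*t') := by
      apply Real.exp_le_exp.mpr
      have : (n:ℝ) ≥ 0 := Nat.cast_nonneg n
      nlinarith
    have step1 : θ * (‖(θ:ℂ)+(n:ℂ)*z‖)^(n-1) * Real.exp (-θ - (n:ℝ)*z.re) / n.factorial
        ≤ θ*(θ+(n:ℝ)*w)^(n-1)*Real.exp (-θ-(n:ℝ)*t')/(n.factorial:ℝ) := by
      gcongr
    refine le_trans step1 (le_trans (real_term_bound θ w t' hθ hw n hn) ?_)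
    have hqn : 0 ≤ q^n := pow_nonneg hq0 n
    simp only [hMdef, hCdef, hqdef]
    nlinarith [Real.exp_pos (-θ)]

lemma exists_eps (l : ℝ) (hl0 : 0 < l) (hl1 : l < 1) :
    ∃ ε > 0, ∀ z : ℂ, -ε < z.re → z.re < l + ε → |z.im| < ε →
      ‖z‖ * Real.exp (1 - z.re) < 1 := by
  have hkey : l < Real.exp (l-1) := by
    have hlog := Real.log_lt_sub_one_of_pos hl0 (ne_of_lt hl1)
    calc l = Real.exp (Real.log l) := (Real.exp_log hl0).symm
      _ < Real.exp (l-1) := Real.exp_lt_exp.mpr hlog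
  set ε := min ((1-l)/2) (min ((Real.exp (l-1) - l)/4) (1/32)) with hε
  have hε0 : 0 < ε := by
    apply lt_min (by linarith)
    apply lt_min (by linarith)
    norm_num
  have hε1 : ε ≤ (1-l)/2 := min_le_left _ _
  have hε2 : ε ≤ (Real.exp (l-1) - l)/4 := le_trans (min_le_right _ _) (min_le_left _ _)
  have hε3 : ε ≤ 1/32 := le_trans (min_le_right _ _) (min_le_right _ _)
  refine ⟨ε, hε0, fun z h1 h2 h3 => ?_⟩
  set t := z.re
  have habs : ‖z‖ < |t| + ε := by
    calc ‖z‖ ≤ |t| + |z.im| := Complex.norm_le_abs_re_add_abs_im z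
      _ < |t| + ε := by linarith
  have hE : 0 < Real.exp (1 - t) := Real.exp_pos _
  have hstep : (|t| + ε) * Real.exp (1 - t) ≤ 1 := by
    rcases lt_or_ge t 0 with ht | ht
    · -- negative real part case
      have h4 : |t| < ε := by rw [abs_of_neg ht]; linarith
      have h5 : Real.exp (1 - t) ≤ Real.exp (1 + ε) := by
        apply Real.exp_le_exp.mpr; linarith
      have h6 : Real.exp (1 + ε) ≤ Real.exp 2 := by
        apply Real.exp_le_exp.mpr; linarith
      have h7 : Real.exp 2 < 8 := by
        have he := Real.exp_one_lt_d9
        have : Real.exp 2 = Real.exp 1 * Real.exp 1 := by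
          rw [← Real.exp_add]; norm_num
        nlinarith [Real.exp_pos 1]
      have h8 : (|t| + ε) ≤ 2 * ε := by linarith
      calc (|t| + ε) * Real.exp (1 - t) ≤ (2*ε) * Real.exp 2 := by
            apply mul_le_mul h8 (le_trans h5 h6) hE.le (by linarith)
        _ ≤ (2*(1/32)) * 8 := by
            apply mul_le_mul (by linarith) h7.le (Real.exp_pos 2).le (by norm_num)
        _ ≤ 1 := by norm_num
    · -- nonnegative real part
      rw [abs_of_nonneg ht]
      set u := (l + ε) - t with hu
      have hu0 : 0 ≤ u := by simp only [hu]; linarith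
      set A := l + 2*ε with hA
      have hA1 : A ≤ 1 := by simp only [hA]; linarith
      have hA0 : 0 < A := by simp only [hA]; linarith
      -- core : (A - u) * exp u ≤ A
      have e1 : (1:ℝ) - u ≤ Real.exp (-u) := by
        have := Real.add_one_le_exp (-u)
        linarith
      have e2 : Real.exp u * Real.exp (-u) = 1 := by
        rw [← Real.exp_add]; norm_num
      have e3 : Real.exp u * (1 - u) ≤ 1 := by
        calc Real.exp u * (1 - u) ≤ Real.exp u * Real.exp (-u) :=
              mul_le_mul_of_nonneg_left e1 (Real.exp_pos u).le
          _ = 1 := e2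
      have e4 : (1:ℝ) ≤ Real.exp u := by
        have := Real.add_one_le_exp u; linarith
      have core : (A - u) * Real.exp u ≤ A := by nlinarith
      -- transfer
      have hsplit : Real.exp (1 - t) = Real.exp u * Real.exp (1 - (l+ε)) := by
        rw [← Real.exp_add]; congr 1; simp only [hu]; ring
      have htA : t + ε = A - u := by simp only [hA, hu]; ring
      have trans1 : (t + ε) * Real.exp (1 - t) ≤ A * Real.exp (1 - (l+ε)) := by
        rw [htA, hsplit, ← mul_assoc]
        apply mul_le_mul_of_nonneg_right core (Real.exp_pos _).le
      -- final bound
      have hB1 : A < Real.exp (l-1) := by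
        simp only [hA]
        linarith
      have hB2 : Real.exp (1 - (l+ε)) ≤ Real.exp (1-l) := by
        apply Real.exp_le_exp.mpr; linarith
      have hB3 : Real.exp (l-1) * Real.exp (1-l) = 1 := by
        rw [← Real.exp_add]; norm_num
      have hB : A * Real.exp (1 - (l+ε)) ≤ 1 := by
        calc A * Real.exp (1 - (l+ε)) ≤ Real.exp (l-1) * Real.exp (1-l) := by
              apply mul_le_mul hB1.le hB2 (Real.exp_pos _).le (Real.exp_pos _).le
          _ = 1 := hB3
      linarith
  calc ‖z‖ * Real.exp (1 - t) < (|t| + ε) * Real.exp (1 - t) :=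
        mul_lt_mul_of_pos_right habs hE
    _ ≤ 1 := hstep

lemma gpd_hasSum_one (θ l : ℝ) (hθ : 0 < θ) (hl0 : 0 < l) (hl1 : l < 1) :
    HasSum (gpdf θ l) 1 := by
  rcases le_or_gt l (1/5) with hsmall | hbig
  · exact gpd_hasSum_one_small θ l hθ hl0 hsmall
  obtain ⟨ε, hε0, hV⟩ := exists_eps l hl0 hl1
  set U : Set ℂ := Complex.re ⁻¹' (Set.Ioo (-ε) (l+ε)) ∩ Complex.im ⁻¹' (Set.Ioo (-ε) ε)
    with hU
  have hUopen : IsOpen U :=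
    (isOpen_Ioo.preimage Complex.continuous_re).inter
      (isOpen_Ioo.preimage Complex.continuous_im)
  have hUconv : Convex ℝ U := by
    apply Convex.inter
    · have := (convex_Ioo (-ε) (l+ε)).linear_preimage (Complex.reLm)
      simpa using this
    · have := (convex_Ioo (-ε) ε).linear_preimage (Complex.imLm)
      simpa using this
  have hUV : ∀ z ∈ U, ‖z‖ * Real.exp (1 - z.re) < 1 := by
    intro z hz
    obtain ⟨⟨h1, h2⟩, h3, h4⟩ := hz
    exact hV z h1 h2 (abs_lt.mpr ⟨h3, h4⟩)
  set F : ℂ → ℂ := fun z => ∑' n, cf θ n z with hF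
  have hFan : AnalyticOnNhd ℂ F U := by
    apply DifferentiableOn.analyticOnNhd ?_ hUopen
    intro z hz
    obtain ⟨ρ, hρ0, u, hu, hub⟩ := cf_ball_bound θ hθ z (hUV z hz)
    have hUnif := tendstoUniformlyOn_tsum hu hub
    have hdiff : DifferentiableOn ℂ F (Metric.ball z ρ) := by
      apply TendstoLocallyUniformlyOn.differentiableOn
        ((hUnif.mono Metric.ball_subset_closedBall).tendstoLocallyUniformlyOn)
        (Filter.Eventually.of_forall (fun t => ?_)) Metric.isOpen_ball
      exact (Differentiable.fun_sum (fun n _ => cf_differentiable θ n)).differentiableOn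
    exact ((hdiff.differentiableAt
      (Metric.isOpen_ball.mem_nhds (Metric.mem_ball_self hρ0))).differentiableWithinAt)
  have hSum : ∀ z ∈ U, HasSum (fun n => cf θ n z) (F z) := by
    intro z hz
    obtain ⟨ρ, hρ0, u, hu, hub⟩ := cf_ball_bound θ hθ z (hUV z hz)
    have hs : Summable (fun n => cf θ n z) := by
      apply Summable.of_norm
      exact Summable.of_nonneg_of_le (fun n => norm_nonneg _)
        (fun n => hub n z (Metric.mem_closedBall_self hρ0.le)) hu
    exact hs.hasSum
  have hUpre : IsPreconnected U := hUconv.isPreconnected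
  have h0U : (0:ℂ) ∈ U := by
    constructor <;> constructor <;> simp <;> positivity
  have hlU : ((l:ℝ):ℂ) ∈ U := by
    constructor <;> constructor <;> simp [hε0] <;> linarith
  have hxval : ∀ k : ℕ, F (((1/5 : ℝ)/((k:ℝ)+1) : ℝ) : ℂ) = 1 := by
    intro k
    set x : ℝ := (1/5)/((k:ℝ)+1) with hx
    have hx0 : 0 < x := by positivity
    have hx5 : x ≤ 1/5 := by
      apply div_le_self (by norm_num)
      have : (0:ℝ) ≤ (k:ℝ) := Nat.cast_nonneg k
      linarith
    have hs := gpd_hasSum_one_small θ x hθ hx0 hx5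
    have hs' : HasSum (fun n => cf θ n (x:ℂ)) (((1:ℝ)):ℂ) := by
      rw [show (fun n => cf θ n (x:ℂ)) = (fun n => ((gpdf θ x n : ℝ):ℂ)) from
        funext (cf_real θ x)]
      exact (RCLike.hasSum_ofReal ℂ).mpr hs
    have := hs'.tsum_eq
    simpa using this
  have hfreq : ∃ᶠ z in nhdsWithin 0 {(0:ℂ)}ᶜ, F z = 1 := by
    have htend : Filter.Tendsto (fun k : ℕ => (((1/5:ℝ)/((k:ℝ)+1) : ℝ) : ℂ))
        Filter.atTop (nhdsWithin 0 {(0:ℂ)}ᶜ) := by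
      rw [tendsto_nhdsWithin_iff]
      constructor
      · have hreal : Filter.Tendsto (fun k : ℕ => (1/5:ℝ)/((k:ℝ)+1)) Filter.atTop (nhds 0) := by
          have h1 : Filter.Tendsto (fun k : ℕ => 1/((k:ℝ)+1)) Filter.atTop (nhds 0) :=
            tendsto_one_div_add_atTop_nhds_zero_nat
          have h2 := h1.const_mul (1/5:ℝ)
          simp only [mul_zero] at h2
          convert h2 using 2 with k
          ring
        have h2 := (Complex.continuous_ofReal.tendsto 0).comp hreal
        have h3 : Filter.Tendsto (fun k : ℕ => (((1/5:ℝ)/((k:ℝ)+1) : ℝ) : ℂ))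
            Filter.atTop (nhds (((0:ℝ):ℂ))) := h2
        simpa using h3
      · refine Filter.Eventually.of_forall (fun k => ?_)
        simp only [Set.mem_compl_iff, Set.mem_singleton_iff]
        intro hcon
        rw [Complex.ofReal_eq_zero] at hcon
        have : (0:ℝ) < (1/5:ℝ)/((k:ℝ)+1) := by positivity
        linarith [hcon ▸ this]
    exact htend.frequently (Filter.Frequently.of_forall hxval)
  have hEq : Set.EqOn F (fun _ => (1:ℂ)) U :=
    hFan.eqOn_of_preconnected_of_frequently_eq analyticOnNhd_const hUpre h0U hfreq
  have hFl : F ((l:ℝ):ℂ) = 1 := hEq hlU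
  have hsuml : HasSum (fun n => cf θ n ((l:ℝ):ℂ)) 1 := hFl ▸ hSum _ hlU
  have hsuml' : HasSum (fun n => ((gpdf θ l n : ℝ):ℂ)) (((1:ℝ)):ℂ) := by
    rw [show (fun n => ((gpdf θ l n : ℝ):ℂ)) = (fun n => cf θ n ((l:ℝ):ℂ)) from
      funext (fun n => (cf_real θ l n).symm)]
    simpa using hsuml
  exact (RCLike.hasSum_ofReal ℂ).mp hsuml'

theorem gpd_is_probability (θ l : ℝ) (hθ : 0 < θ) (hl0 : 0 ≤ l) (hl1 : l < 1) :
    HasSum (fun n : ℕ =>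
      θ * (θ + n * l) ^ ((n : ℝ) - 1) / n.factorial * Real.exp (-θ - n * l)) 1 := by
  have hmain : HasSum (gpdf θ l) 1 := by
    rcases eq_or_lt_of_le hl0 with h0 | hpos
    · -- l = 0 : ordinary Poisson
      subst h0
      have h := (hasSum_exp_real θ).mul_left (Real.exp (-θ))
      rw [← Real.exp_add, neg_add_cancel, Real.exp_zero] at h
      have hpt0 : ∀ n : ℕ, Real.exp (-θ) * (θ^n/(n.factorial:ℝ)) = gpdf θ 0 n := by
        intro n
        simp only [gpdf, mul_zero, sub_zero, add_zero]
        rcases Nat.eq_zero_or_pos n with h0 | hn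
        · subst h0; simp
        · rw [if_neg (Nat.pos_iff_ne_zero.mp hn),
            show θ*θ^(n-1) = θ^n by
              rw [← pow_succ', Nat.sub_add_cancel hn]]
          ring
      exact (funext hpt0 : _) ▸ h
    · exact gpd_hasSum_one θ l hθ hpos hl1
  have hpt : ∀ n : ℕ, gpdf θ l n
      = θ * (θ + n * l) ^ ((n : ℝ) - 1) / n.factorial * Real.exp (-θ - n * l) := by
    intro n
    rcases Nat.eq_zero_or_pos n with h0 | hn
    · subst h0
      simp only [gpdf, if_pos rfl, Nat.cast_zero, zero_mul, add_zero, Nat.factorial_zero,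
        Nat.cast_one]
      rw [show (0:ℝ) - 1 = (-1 : ℝ) by norm_num, Real.rpow_neg_one]
      rw [mul_inv_cancel₀ (ne_of_gt hθ)]
      simp
    · have hne : n ≠ 0 := Nat.pos_iff_ne_zero.mp hn
      have hcast : (n:ℝ) - 1 = ((n-1 : ℕ):ℝ) := by
        rw [Nat.cast_sub hn]; norm_num
      rw [hcast, Real.rpow_natCast]
      simp only [gpdf, if_neg hne]
      ring
  rw [show gpdf θ l = (fun n : ℕ =>
    θ * (θ + n * l) ^ ((n : ℝ) - 1) / n.factorial * Real.exp (-θ - n * l)) from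
    funext hpt] at hmain
  exact hmain
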